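/- Let V ⊆ ℂ be a nonempty connected open set and let h₁, …, h_r be holomorphic functions on V that are algebraically independent over the field of rational functions, i.e. for every nonzero polynomial P ∈ ℂ[s, X₁, …, X_r] the function s ↦ P(s, h₁(s), …, h_r(s)) is not identically zero on V. Let Ω ⊆ ℂ^{1+r} be a connected open set containing the graph {(s, h₁(s), …, h_r(s)) : s ∈ V}, and let Q be a Nash function on Ω such that Q(s, h₁(s), …, h_r(s)) = 0 for all s ∈ V. Then Q is identically zero on Ω. -/

import Mathlib

open MvPolynomial Set

/-- Evaluation of a multivariate polynomial along differentiable coordinate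
functions is differentiable. -/
private lemma diffOn_mveval {n : ℕ} {E : Type*} [NormedAddCommGroup E] [NormedSpace ℂ E]
    (c : MvPolynomial (Fin n) ℂ) (f : Fin n → E → ℂ) (S : Set E)
    (hf : ∀ i, DifferentiableOn ℂ (f i) S) :
    DifferentiableOn ℂ (fun x => MvPolynomial.eval (fun i => f i x) c) S := by
  induction c using MvPolynomial.induction_on with
  | C a => simpa using differentiableOn_const a
  | add p q hp hq => simpa [map_add, Pi.add_def] using hp.add hq
  | mul_X p i hp => simpa [MvPolynomial.eval_X, Pi.mul_def] using hp.mul (hf i)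

/-- `f` is a Nash function at `z₀ ∈ D`: there is an open neighbourhood `U ⊆ D`
of `z₀` and a nonzero polynomial `P` in `n+1` variables with `P(z, f z) = 0` on `U`. -/
def IsNashAt (n : ℕ) (D : Set (Fin n → ℂ)) (f : (Fin n → ℂ) → ℂ)
    (z₀ : Fin n → ℂ) : Prop :=
  ∃ U : Set (Fin n → ℂ), IsOpen U ∧ z₀ ∈ U ∧ U ⊆ D ∧
    ∃ P : MvPolynomial (Fin (n + 1)) ℂ, P ≠ 0 ∧
      ∀ z ∈ U, MvPolynomial.eval (Fin.snoc z (f z)) P = 0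

/-- `f` is a Nash function on the open set `D`: it is holomorphic on `D` and a
Nash function at every point of `D`. -/
def IsNashOn (n : ℕ) (D : Set (Fin n → ℂ)) (f : (Fin n → ℂ) → ℂ) : Prop :=
  DifferentiableOn ℂ f D ∧ ∀ z₀ ∈ D, IsNashAt n D f z₀

/-- If `h₁, …, h_r` are holomorphic on a connected open `V ⊆ ℂ` and algebraically
independent over the rational functions, then a Nash function on a connected open
neighbourhood of the graph `{(s, h₁(s), …, h_r(s))}` vanishing on the graph
vanishes identically. -/
theorem nash_vanishing_on_transcendental_graph (r : ℕ)
    (V : Set ℂ) (hVo : IsOpen V) (hVc : IsConnected V)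
    (h : Fin r → ℂ → ℂ) (hhol : ∀ i, DifferentiableOn ℂ (h i) V)
    (hindep : ∀ P : MvPolynomial (Fin (r + 1)) ℂ, P ≠ 0 →
      ∃ s ∈ V, MvPolynomial.eval (Fin.cons s fun i => h i s) P ≠ 0)
    (Ω : Set (Fin (r + 1) → ℂ)) (hΩo : IsOpen Ω) (hΩc : IsConnected Ω)
    (hgraph : ∀ s ∈ V, (Fin.cons s fun i => h i s) ∈ Ω)
    (Q : (Fin (r + 1) → ℂ) → ℂ) (hQ : IsNashOn (r + 1) Ω Q)
    (hvanish : ∀ s ∈ V, Q (Fin.cons s fun i => h i s) = 0) :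
    ∀ p ∈ Ω, Q p = 0 := by
  classical
  set gr : ℂ → (Fin (r + 1) → ℂ) := fun s => Fin.cons s fun i => h i s with hgr_def
  have hvan' : ∀ s ∈ V, Q (gr s) = 0 := hvanish
  have hindep' : ∀ P : MvPolynomial (Fin (r + 1)) ℂ, P ≠ 0 →
      ∃ s ∈ V, MvPolynomial.eval (gr s) P ≠ 0 := hindep
  have hgrd : ∀ j : Fin (r + 1), DifferentiableOn ℂ (fun s => gr s j) V := by
    intro j
    refine Fin.cases ?_ ?_ j
    · exact (differentiableOn_id : DifferentiableOn ℂ id V)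
    · intro i; simpa [hgr_def] using hhol i
  have hgrc : ContinuousOn gr V :=
    continuousOn_pi.2 fun j => (hgrd j).continuousOn
  have hQc : ContinuousOn Q Ω := hQ.1.continuousOn
  -- identity-theorem tool on `V`
  have keyV : ∀ c : MvPolynomial (Fin (r + 1)) ℂ, c ≠ 0 →
      ∀ V' : Set ℂ, IsOpen V' → V'.Nonempty → V' ⊆ V →
      ∃ s ∈ V', MvPolynomial.eval (gr s) c ≠ 0 := by
    intro c hc V' hV'o hV'ne hV'V
    by_contra hcon
    push_neg at hcon
    obtain ⟨s₁, hs₁⟩ := hV'ne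
    have hφ : DifferentiableOn ℂ (fun s => MvPolynomial.eval (gr s) c) V := by
      simpa using diffOn_mveval c (fun j s => gr s j) V hgrd
    have hφa : AnalyticOnNhd ℂ (fun s => MvPolynomial.eval (gr s) c) V :=
      hφ.analyticOnNhd hVo
    have hzero : Set.EqOn (fun s => MvPolynomial.eval (gr s) c) 0 V := by
      apply hφa.eqOn_zero_of_preconnected_of_eventuallyEq_zero hVc.isPreconnected (hV'V hs₁)
      filter_upwards [hV'o.mem_nhds hs₁] with s hs using hcon s hs
    obtain ⟨s, hsV, hsc⟩ := hindep' c hc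
    exact hsc (hzero hsV)
  -- Step 1: the Nash relation at a graph point
  obtain ⟨s₀, hs₀⟩ := hVc.nonempty
  obtain ⟨U, hUo, hz₀U, hUΩ, P, hPne, hPeq⟩ := hQ.2 _ (hgraph s₀ hs₀)
  set P' : MvPolynomial (Fin (r + 1 + 1)) ℂ :=
    MvPolynomial.rename (finRotate (r + 1 + 1)) P with hP'def
  have hP'ne : P' ≠ 0 := fun hz =>
    hPne ((MvPolynomial.rename_injective _ (finRotate _).injective) (by simpa using hz))
  set q : Polynomial (MvPolynomial (Fin (r + 1)) ℂ) :=
    MvPolynomial.finSuccEquiv ℂ (r + 1) P' with hqdef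
  have hqne : q ≠ 0 := by
    rw [hqdef, ne_eq, EmbeddingLike.map_eq_zero_iff]
    exact hP'ne
  have hEval : ∀ (z : Fin (r + 1) → ℂ) (a : ℂ),
      MvPolynomial.eval (Fin.snoc z a) P =
        Polynomial.eval a (Polynomial.map (MvPolynomial.eval z) q) := by
    intro z a
    have h1 : MvPolynomial.eval (Fin.snoc z a) P = MvPolynomial.eval (Fin.cons a z) P' := by
      rw [hP'def, MvPolynomial.eval_rename, Fin.snoc_eq_cons_rotate]
      rfl
    rw [h1, MvPolynomial.eval_eq_eval_mv_eval', ← hqdef]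
  set V' : Set ℂ := V ∩ gr ⁻¹' U with hV'def
  have hV'o : IsOpen V' := hgrc.isOpen_inter_preimage hVo hUo
  have hV'ne : V'.Nonempty := ⟨s₀, hs₀, hz₀U⟩
  -- the constant coefficient of `q` vanishes
  have hq0 : q.coeff 0 = 0 := by
    by_contra hne
    obtain ⟨s, hsV', hsc⟩ := keyV _ hne V' hV'o hV'ne Set.inter_subset_left
    apply hsc
    have h1 : MvPolynomial.eval (Fin.snoc (gr s) (Q (gr s))) P = 0 := hPeq _ hsV'.2
    rw [hEval, hvan' s hsV'.1, ← Polynomial.coeff_zero_eq_eval_zero,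
      Polynomial.coeff_map] at h1
    exact h1
  -- factor out the maximal power of `X`
  obtain ⟨q', hqq', hq'nd⟩ := q.exists_eq_pow_rootMultiplicity_mul_and_not_dvd hqne 0
  set m := q.rootMultiplicity 0 with hmdef
  rw [map_zero, sub_zero] at hqq' hq'nd
  have hc0 : q'.coeff 0 ≠ 0 := fun hz => hq'nd (Polynomial.X_dvd_iff.2 hz)
  have hm : m ≠ 0 := by
    intro hz
    apply hq'nd
    rw [hz, pow_zero, one_mul] at hqq'
    rw [← hqq']
    exact Polynomial.X_dvd_iff.2 hq0
  obtain ⟨s₁, hs₁V', hs₁c⟩ := keyV _ hc0 V' hV'o hV'ne Set.inter_subset_left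
  set z₁ : Fin (r + 1) → ℂ := gr s₁ with hz₁def
  have hz₁U : z₁ ∈ U := hs₁V'.2
  set F : (Fin (r + 1) → ℂ) → ℂ :=
    fun z => Polynomial.eval (Q z) (Polynomial.map (MvPolynomial.eval z) q') with hFdef
  have hFrel : ∀ z ∈ U, Q z ^ m * F z = 0 := by
    intro z hz
    have h1 := hPeq z hz
    rw [hEval, hqq'] at h1
    simpa [hFdef] using h1
  have hQz₁ : Q z₁ = 0 := hvan' s₁ hs₁V'.1
  have hFz₁ : F z₁ ≠ 0 := by
    simp only [hFdef, hQz₁]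
    rw [← Polynomial.coeff_zero_eq_eval_zero, Polynomial.coeff_map]
    exact hs₁c
  have hFcont : ContinuousOn F U := by
    have hrepr : ∀ z, F z = ∑ k ∈ Finset.range (q'.natDegree + 1),
        MvPolynomial.eval z (q'.coeff k) * Q z ^ k := by
      intro z
      simp only [hFdef]
      rw [Polynomial.eval_map, Polynomial.eval₂_eq_sum_range]
    refine ContinuousOn.congr ?_ fun z _ => hrepr z
    refine continuousOn_finset_sum _ fun k _ => ContinuousOn.mul ?_ ?_
    · exact (MvPolynomial.continuous_eval _).continuousOn
    · exact (hQc.mono hUΩ).pow k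
  set W : Set (Fin (r + 1) → ℂ) := U ∩ F ⁻¹' ({0}ᶜ) with hWdef
  have hWo : IsOpen W := hFcont.isOpen_inter_preimage hUo isOpen_compl_singleton
  have hz₁W : z₁ ∈ W := ⟨hz₁U, hFz₁⟩
  have hQW : ∀ z ∈ W, Q z = 0 := by
    intro z hz
    have h1 := hFrel z hz.1
    rcases mul_eq_zero.1 h1 with h2 | h2
    · exact pow_eq_zero_iff hm |>.1 h2
    · exact absurd h2 hz.2
  -- Step 2: propagate by the identity principle along complex lines
  set E : Set (Fin (r + 1) → ℂ) := Ω ∩ {p | ∀ᶠ z in nhds p, Q z = 0} with hEdef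
  have hEo : IsOpen E := by
    rw [isOpen_iff_mem_nhds]
    intro p hp
    filter_upwards [hΩo.mem_nhds hp.1, hp.2.eventually_nhds] with z h1 h2 using ⟨h1, h2⟩
  have hz₁E : z₁ ∈ E := by
    refine ⟨hUΩ hz₁U, ?_⟩
    filter_upwards [hWo.mem_nhds hz₁W] with z hz using hQW z hz
  have hclosure : closure E ∩ Ω ⊆ E := by
    rintro p ⟨hpcl, hpΩ⟩
    obtain ⟨ε, hε, hball⟩ := Metric.isOpen_iff.1 hΩo p hpΩ
    obtain ⟨q₀, hq₀ball, hq₀E⟩ :=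
      _root_.mem_closure_iff.1 hpcl _ Metric.isOpen_ball (Metric.mem_ball_self hε)
    have hQball : ∀ x ∈ Metric.ball p ε, Q x = 0 := by
      intro x hx
      set L : ℂ → (Fin (r + 1) → ℂ) := fun t => q₀ + t • (x - q₀) with hLdef
      have hLd : Differentiable ℂ L := (differentiable_id.smul_const (x - q₀)).const_add q₀
      set T : Set ℂ := L ⁻¹' Metric.ball p ε with hTdef
      have hTo : IsOpen T := hLd.continuous.isOpen_preimage _ Metric.isOpen_ball
      have hTconv : Convex ℝ T := by
        intro t1 h1 t2 h2 a b ha hb hab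
        have hab' : (a : ℂ) + (b : ℂ) = 1 := by exact_mod_cast hab
        have hkey : L (a • t1 + b • t2) = a • L t1 + b • L t2 := by
          simp only [hLdef]
          match_scalars
          · simp only [Complex.real_smul, Complex.coe_algebraMap]
            linear_combination -hab'
          · simp only [Complex.real_smul, Complex.coe_algebraMap]
            ring
        have hmem : a • L t1 + b • L t2 ∈ Metric.ball p ε :=
          (convex_ball p ε) h1 h2 ha hb hab
        show L (a • t1 + b • t2) ∈ Metric.ball p ε
        rw [hkey]
        exact hmem
      have hL0 : L 0 = q₀ := by simp [hLdef]
      have hL1 : L 1 = x := by simp [hLdef]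
      have h0T : (0 : ℂ) ∈ T := by
        simp only [hTdef, Set.mem_preimage, hL0]
        exact hq₀ball
      have h1T : (1 : ℂ) ∈ T := by
        simp only [hTdef, Set.mem_preimage, hL1]
        exact hx
      have hgd : DifferentiableOn ℂ (Q ∘ L) T :=
        hQ.1.comp hLd.differentiableOn fun t ht => hball ht
      have hga : AnalyticOnNhd ℂ (Q ∘ L) T := hgd.analyticOnNhd hTo
      have hg0 : (Q ∘ L) =ᶠ[nhds 0] 0 := by
        have htend : Filter.Tendsto L (nhds 0) (nhds q₀) := by
          rw [← hL0]
          exact hLd.continuous.continuousAt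
        filter_upwards [htend.eventually hq₀E.2] with t ht using ht
      have := hga.eqOn_zero_of_preconnected_of_eventuallyEq_zero
        hTconv.isPreconnected h0T hg0 h1T
      simpa [hL1] using this
    exact ⟨hpΩ, by filter_upwards [Metric.ball_mem_nhds p hε] with z hz using hQball z hz⟩
  have hΩE : Ω ⊆ E :=
    hΩc.isPreconnected.subset_of_closure_inter_subset hEo ⟨z₁, hz₁E.1, hz₁E⟩ hclosure
  intro p hp
  exact ((hΩE hp).2).self_of_nhds
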